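/- Let C be a cap in (Z/2Z)^n containing six points x1,...,x6 lying in a 4-flat F, and let y ∈ C be a point not in F. Then the 4-flat F' in the parallel class of F containing y meets C only in y; moreover the 15 points x_i + x_j + y (for 1 ≤ i < j ≤ 6) are distinct, lie in F', and together with y fill all 16 points of F'. -/
import Mathlib


def IsCap {n : ℕ} (S : Set (Fin n → ZMod 2)) : Prop :=
  ∀ a ∈ S, ∀ b ∈ S, ∀ c ∈ S, ∀ d ∈ S,
    a ≠ b → a ≠ c → a ≠ d → b ≠ c → b ≠ d → c ≠ d → a + b + c + d ≠ 0

/-- Let `C` be a cap containing six points `x 0, …, x 5` lying in a 4-flat `F`, and let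
`y ∈ C` lie outside `F`. If `F'` is the 4-flat parallel to `F` (same direction) containing
`y`, then `C` meets `F'` only in `y`; the 15 points `x i + x j + y` (`i < j`) are distinct,
lie in `F'`, and together with `y` fill all of `F'`. -/
theorem six_points_in_four_flat_structure {n : ℕ} (C : Set (Fin n → ZMod 2))
    (hC : IsCap C) (x : Fin 6 → (Fin n → ZMod 2)) (hx : Function.Injective x)
    (hxC : ∀ i, x i ∈ C)
    (F F' : AffineSubspace (ZMod 2) (Fin n → ZMod 2))
    (hF : Module.finrank (ZMod 2) F.direction = 4) (hxF : ∀ i, x i ∈ F)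
    (y : Fin n → ZMod 2) (hyC : y ∈ C) (hyF : y ∉ F)
    (hdir : F'.direction = F.direction) (hyF' : y ∈ F') :
    C ∩ (F' : Set (Fin n → ZMod 2)) = {y} ∧
      (∀ i j : Fin 6, i < j → x i + x j + y ∈ F') ∧
      (∀ i j k l : Fin 6, i < j → k < l →
        x i + x j + y = x k + x l + y → i = k ∧ j = l) ∧
      (F' : Set (Fin n → ZMod 2)) =
        {y} ∪ {p | ∃ i j : Fin 6, i < j ∧ p = x i + x j + y} := by
  have addSelf : ∀ a : Fin n → ZMod 2, a + a = 0 := fun a => by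
    funext i; exact CharTwo.add_self_eq_zero _
  have negSelf : ∀ a : Fin n → ZMod 2, -a = a := fun a => by
    funext i; exact CharTwo.neg_eq _
  have sum4 : ∀ a b c d : Fin n → ZMod 2, a + b = c + d → a + b + c + d = 0 := by
    intro a b c d h
    rw [add_assoc, ← h]
    exact addSelf _
  -- points of F are not in F'
  have hdisj : ∀ w, w ∈ F → w ∉ F' := by
    intro w hwF hwF'
    apply hyF
    have h1 : w -ᵥ y ∈ F.direction := by
      rw [← hdir]; exact AffineSubspace.vsub_mem_direction hwF' hyF'
    have h2 := AffineSubspace.vadd_mem_of_mem_direction (F.direction.neg_mem h1) hwF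
    have h3 : -(w -ᵥ y) +ᵥ w = y := by
      simp only [vsub_eq_sub, vadd_eq_add]; abel
    rwa [h3] at h2
  -- part 2
  have part2 : ∀ i j : Fin 6, i < j → x i + x j + y ∈ F' := by
    intro i j _
    have h1 : x i -ᵥ x j ∈ F'.direction := by
      rw [hdir]; exact AffineSubspace.vsub_mem_direction (hxF i) (hxF j)
    have h2 := AffineSubspace.vadd_mem_of_mem_direction h1 hyF'
    have h3 : (x i -ᵥ x j) +ᵥ y = x i + x j + y := by
      simp only [vsub_eq_sub, vadd_eq_add, sub_eq_add_neg, negSelf]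
    rwa [h3] at h2
  -- part 3
  have part3 : ∀ i j k l : Fin 6, i < j → k < l →
      x i + x j + y = x k + x l + y → i = k ∧ j = l := by
    intro i j k l hij hkl h
    have h' : x i + x j = x k + x l := add_right_cancel h
    by_cases hik : i = k
    · subst hik
      exact ⟨rfl, hx (add_left_cancel h')⟩
    · exfalso
      have hsum : x i + x j + x k + x l = 0 := sum4 _ _ _ _ h'
      have hil : i ≠ l := by
        intro hil; subst hil
        rw [add_comm (x k) (x i)] at h'
        have : j = k := hx (add_left_cancel h')
        omega
      have hjk : j ≠ k := by
        intro hjk; subst hjk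
        rw [add_comm (x j) (x l)] at h'
        have : i = l := hx (add_right_cancel h')
        omega
      have hjl : j ≠ l := by
        intro hjl; subst hjl
        exact hik (hx (add_right_cancel h'))
      exact hC (x i) (hxC i) (x j) (hxC j) (x k) (hxC k) (x l) (hxC l)
        (hx.ne hij.ne) (hx.ne hik) (hx.ne hil) (hx.ne hjk) (hx.ne hjl)
        (hx.ne hkl.ne) hsum
  -- y differs from the 15 points
  have hyne : ∀ i j : Fin 6, i < j → x i + x j + y ≠ y := by
    intro i j hij h
    have h0 : x i + x j + y = 0 + y := by rw [zero_add]; exact h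
    have h1 : x i + x j = 0 := add_right_cancel h0
    have h2 : x i + x j = x j + x j := by rw [h1, addSelf]
    exact hx.ne hij.ne (add_right_cancel h2)
  -- cardinality of F'
  have e : ↥F'.direction ≃ ↥(F' : Set (Fin n → ZMod 2)) :=
    { toFun := fun v => ⟨(v : Fin n → ZMod 2) +ᵥ y,
        AffineSubspace.vadd_mem_of_mem_direction v.2 hyF'⟩
      invFun := fun z => ⟨(z : Fin n → ZMod 2) -ᵥ y,
        AffineSubspace.vsub_mem_direction z.2 hyF'⟩
      left_inv := fun v => by
        ext1; simp [vsub_eq_sub, vadd_eq_add]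
      right_inv := fun z => by
        ext1; simp [vsub_eq_sub, vadd_eq_add] }
  have hcarddir : Nat.card ↥F'.direction = 16 := by
    haveI : Fintype ↥F'.direction := Fintype.ofFinite _
    rw [Nat.card_eq_fintype_card, Module.card_eq_pow_finrank (K := ZMod 2) (V := ↥F'.direction)]
    have hfr : Module.finrank (ZMod 2) ↥F'.direction = 4 := by rw [hdir]; exact hF
    rw [hfr]
    rfl
  have hcardF' : (F' : Set (Fin n → ZMod 2)).ncard = 16 := by
    rw [← Nat.card_coe_set_eq, ← Nat.card_congr e]
    exact hcarddir
  -- the set S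
  set T : Set (Fin n → ZMod 2) :=
    (fun p : Fin 6 × Fin 6 => x p.1 + x p.2 + y) '' {p | p.1 < p.2} with hT
  have hTdesc : {p | ∃ i j : Fin 6, i < j ∧ p = x i + x j + y} = T := by
    ext p
    simp only [hT, Set.mem_image, Set.mem_setOf_eq]
    constructor
    · rintro ⟨i, j, hij, rfl⟩; exact ⟨(i, j), hij, rfl⟩
    · rintro ⟨⟨i, j⟩, hij, rfl⟩; exact ⟨i, j, hij, rfl⟩
  have hTinj : Set.InjOn (fun p : Fin 6 × Fin 6 => x p.1 + x p.2 + y) {p | p.1 < p.2} := by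
    rintro ⟨i, j⟩ hij ⟨k, l⟩ hkl h
    have := part3 i j k l hij hkl h
    simp [Prod.ext_iff, this.1, this.2]
  have hbase : ({p : Fin 6 × Fin 6 | p.1 < p.2}).ncard = 15 := by
    have h1 : {p : Fin 6 × Fin 6 | p.1 < p.2} =
        ↑(Finset.univ.filter fun p : Fin 6 × Fin 6 => p.1 < p.2) := by
      ext p; simp
    rw [h1, Set.ncard_coe_finset]
    decide
  have hTcard : T.ncard = 15 := by
    rw [hT, Set.ncard_image_of_injOn hTinj, hbase]
  have hTfin : T.Finite := Set.toFinite _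
  have hynotT : y ∉ T := by
    rintro ⟨⟨i, j⟩, hij, h⟩
    exact hyne i j hij h
  have hScard : ({y} ∪ T : Set (Fin n → ZMod 2)).ncard = 16 := by
    rw [Set.singleton_union, Set.ncard_insert_of_notMem hynotT hTfin, hTcard]
  have hSsub : ({y} ∪ T : Set (Fin n → ZMod 2)) ⊆ (F' : Set (Fin n → ZMod 2)) := by
    rintro p (rfl | ⟨⟨i, j⟩, hij, rfl⟩)
    · exact hyF'
    · exact part2 i j hij
  have part4 : (F' : Set (Fin n → ZMod 2)) =
      {y} ∪ {p | ∃ i j : Fin 6, i < j ∧ p = x i + x j + y} := by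
    rw [hTdesc]
    exact (Set.eq_of_subset_of_ncard_le hSsub (by rw [hScard, hcardF']) (Set.toFinite _)).symm
  refine ⟨?_, part2, part3, part4⟩
  -- part 1
  ext z
  simp only [Set.mem_inter_iff, Set.mem_singleton_iff]
  constructor
  · rintro ⟨hzC, hzF'⟩
    have hz := part4 ▸ hzF'
    rcases hz with rfl | hz
    · rfl
    · exfalso
      obtain ⟨i, j, hij, rfl⟩ := hz
      have hzF'2 : x i + x j + y ∈ F' := part2 i j hij
      have hne1 : x i + x j + y ≠ x i := fun h => hdisj (x i) (hxF i) (h ▸ hzF'2)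
      have hne2 : x i + x j + y ≠ x j := fun h => hdisj (x j) (hxF j) (h ▸ hzF'2)
      have hne3 : x i + x j + y ≠ y := hyne i j hij
      have hne4 : x i ≠ y := fun h => hyF (h ▸ hxF i)
      have hne5 : x j ≠ y := fun h => hyF (h ▸ hxF j)
      have hsum : (x i + x j + y) + x i + x j + y = 0 := by
        have h1 : (x i + x j + y) + x i + x j + y
            = (x i + x i) + (x j + x j) + (y + y) := by abel
        rw [h1]; simp [addSelf]
      exact hC _ hzC (x i) (hxC i) (x j) (hxC j) y hyC
        hne1 hne2 hne3 (hx.ne hij.ne) hne4 hne5 hsum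
  · rintro rfl
    exact ⟨hyC, hyF'⟩
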